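/- Let M be a finite monoid, A a set, and φ : A* → M a monoid homomorphism from the free monoid on A. Then for every word w ∈ A* there exists a word v ∈ A* such that v is a scattered subword (subsequence/sublist) of w, the length of v is strictly less than the cardinality of M, and φ(v) = φ(w). -/
import Mathlib

private lemma subword_aux {A M : Type*} [Monoid M] [Fintype M]
    (φ : FreeMonoid A →* M) :
    ∀ n (w : List A), w.length ≤ n →
      ∃ v : List A, v.Sublist w ∧ v.length < Fintype.card M ∧
        φ (FreeMonoid.ofList v) = φ (FreeMonoid.ofList w) := by
  intro n
  induction n with
  | zero =>
    intro w hw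
    refine ⟨w, List.Sublist.refl w, ?_, rfl⟩
    have : 0 < Fintype.card M := Fintype.card_pos
    omega
  | succ n ih =>
    intro w hw
    by_cases hlt : w.length < Fintype.card M
    · exact ⟨w, List.Sublist.refl w, hlt, rfl⟩
    · push_neg at hlt
      -- pigeonhole on prefixes
      set c := Fintype.card M with hc
      have hcard : Fintype.card M < Fintype.card (Fin (c + 1)) := by
        simp [hc]
      obtain ⟨i, j, hij, heq⟩ :=
        Fintype.exists_ne_map_eq_of_card_lt
          (fun i : Fin (c + 1) => φ (FreeMonoid.ofList (w.take i))) hcard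
      wlog hlt2 : (i : ℕ) < (j : ℕ) generalizing i j
      · exact this j i hij.symm heq.symm (by omega)
      have hjle : (j : ℕ) ≤ w.length := le_trans (by omega) hlt
      set v' := w.take i ++ w.drop j with hv'
      have hsub : v'.Sublist w := by
        have h1 : (w.drop j).Sublist (w.drop i) := by
          have : w.drop j = (w.drop i).drop (j - i) := by
            rw [List.drop_drop]; congr 1; omega
          rw [this]; exact List.drop_sublist _ _
        calc v'.Sublist (w.take i ++ w.drop i) :=
              List.Sublist.append (List.Sublist.refl _) h1
          _ = w := List.take_append_drop _ _
      have hlen : v'.length < w.length := by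
        simp only [hv', List.length_append, List.length_take, List.length_drop]
        omega
      have hphi : φ (FreeMonoid.ofList v') = φ (FreeMonoid.ofList w) := by
        have h1 : FreeMonoid.ofList v' =
            FreeMonoid.ofList (w.take i) * FreeMonoid.ofList (w.drop j) := rfl
        have h2 : FreeMonoid.ofList w =
            FreeMonoid.ofList (w.take j) * FreeMonoid.ofList (w.drop j) := by
          rw [← FreeMonoid.ofList_append, List.take_append_drop]
        rw [h1, h2, map_mul, map_mul, heq]
      obtain ⟨v, hs, hl, hp⟩ := ih v' (by omega)
      exact ⟨v, hs.trans hsub, hl, hp.trans hphi⟩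

/-- For a finite monoid `M` and a monoid homomorphism `φ` from the free
monoid on a set `A` to `M`, every word `w` admits a scattered subword (sublist) `v`
of length strictly less than the cardinality of `M` with `φ v = φ w`. -/
theorem subword_with_same_image {A M : Type*} [Monoid M] [Fintype M]
    (φ : FreeMonoid A →* M) (w : FreeMonoid A) :
    ∃ v : FreeMonoid A,
      List.Sublist (FreeMonoid.toList v) (FreeMonoid.toList w) ∧
      (FreeMonoid.toList v).length < Fintype.card M ∧
      φ v = φ w := by
  obtain ⟨v, hs, hl, hp⟩ := subword_aux φ (FreeMonoid.toList w).length
    (FreeMonoid.toList w) le_rfl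
  refine ⟨FreeMonoid.ofList v, ?_, ?_, ?_⟩
  · simpa using hs
  · simpa using hl
  · simpa using hp
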